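/- Let V be a finite type with m elements, let G be a simple graph on V, and let r be a natural number with 2 ≤ r ≤ m. Suppose that every finset of V of cardinality r contains two distinct adjacent vertices. Then (m − 1)² ≤ r² · (number of edges of G); equivalently, m ≤ r · √(number of edges of G) + 1. -/

import Mathlib

/-- The form of the double-counting bound used in Proposition 5.7: if every
`r`-subset of the `m` vertices contains two distinct adjacent vertices, then
`(m-1)² ≤ r² |E|`, i.e. `m ≤ r √|E| + 1`. -/
theorem vertex_count_upper_bound (V : Type*) [Fintype V] [DecidableEq V]
    (G : SimpleGraph V) [DecidableRel G.Adj] (m r : ℕ)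
    (hm : Fintype.card V = m) (hr2 : 2 ≤ r) (hrm : r ≤ m)
    (hcover : ∀ S : Finset V, S.card = r →
      ∃ u ∈ S, ∃ v ∈ S, u ≠ v ∧ G.Adj u v) :
    (m - 1) ^ 2 ≤ r ^ 2 * G.edgeFinset.card := by
  classical
  obtain ⟨v0⟩ : Nonempty V := by
    rw [← Fintype.card_pos_iff]; omega
  set s : Finset (Finset V) := Finset.powersetCard r Finset.univ with hs
  have hmem : ∀ S : Finset V, S ∈ s ↔ S.card = r := by
    intro S
    simp [hs, Finset.mem_powersetCard]
  have key : ∀ S : Finset V, ∃ e : Sym2 V,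
      S ∈ s → e ∈ G.edgeFinset ∧ ∀ x ∈ e, x ∈ S := by
    intro S
    by_cases hS : S ∈ s
    · obtain ⟨u, hu, v, hv, huv, hadj⟩ := hcover S ((hmem S).mp hS)
      refine ⟨s(u, v), fun _ => ⟨by simpa [SimpleGraph.mem_edgeFinset], ?_⟩⟩
      intro x hx
      rcases Sym2.mem_iff.mp hx with rfl | rfl <;> assumption
    · exact ⟨s(v0, v0), fun h => absurd h hS⟩
  choose f hf using key
  have himg : s.image f ⊆ G.edgeFinset := by
    intro e he
    obtain ⟨S, hS, rfl⟩ := Finset.mem_image.mp he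
    exact (hf S hS).1
  have hfiber : ∀ e ∈ s.image f,
      (s.filter fun S => f S = e).card ≤ (m - 2).choose (r - 2) := by
    intro e he
    have heE := himg he
    induction e using Sym2.ind with
    | _ u v =>
      have huv : u ≠ v := by
        intro h; subst h
        exact G.loopless.irrefl u (by simpa [SimpleGraph.mem_edgeFinset] using heE)
      have hsub : ∀ S ∈ s.filter fun S => f S = s(u, v), {u, v} ⊆ S := by
        intro S hS
        obtain ⟨hS1, hS2⟩ := Finset.mem_filter.mp hS
        intro x hx
        apply (hf S hS1).2
        rw [hS2]
        rcases Finset.mem_insert.mp hx with rfl | hx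
        · exact Sym2.mem_mk_left _ _
        · rw [Finset.mem_singleton] at hx; subst hx; exact Sym2.mem_mk_right _ _
      have hcard2 : ({u, v} : Finset V).card = 2 := by
        rw [Finset.card_insert_of_notMem (by simpa using huv), Finset.card_singleton]
      calc (s.filter fun S => f S = s(u, v)).card
          ≤ (Finset.powersetCard (r - 2) (Finset.univ \ {u, v})).card := by
            apply Finset.card_le_card_of_injOn (fun S => S \ {u, v})
            · intro S hS
              rw [Finset.mem_coe, Finset.mem_powersetCard]
              constructor
              · exact Finset.sdiff_subset_sdiff (Finset.subset_univ S) le_rfl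
              · rw [Finset.card_sdiff_of_subset (hsub S hS), hcard2,
                  (hmem S).mp (Finset.mem_filter.mp hS).1]
            · intro S1 h1 S2 h2 hEq
              have e1 : S1 = S1 \ {u, v} ∪ {u, v} :=
                (Finset.sdiff_union_of_subset (hsub S1 h1)).symm
              have e2 : S2 = S2 \ {u, v} ∪ {u, v} :=
                (Finset.sdiff_union_of_subset (hsub S2 h2)).symm
              simp only at hEq
              rw [e1, e2, hEq]
        _ = (m - 2).choose (r - 2) := by
            rw [Finset.card_powersetCard, Finset.card_sdiff_of_subset (Finset.subset_univ _),
              hcard2, Finset.card_univ, hm]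
  have hmain : m.choose r ≤ (m - 2).choose (r - 2) * G.edgeFinset.card := by
    have h1 : s.card ≤ (m - 2).choose (r - 2) * (s.image f).card :=
      Finset.card_le_mul_card_image s _ hfiber
    have h2 : s.card = m.choose r := by
      rw [hs, Finset.card_powersetCard, Finset.card_univ, hm]
    calc m.choose r ≤ (m - 2).choose (r - 2) * (s.image f).card := h2 ▸ h1
      _ ≤ (m - 2).choose (r - 2) * G.edgeFinset.card :=
          Nat.mul_le_mul_left _ (Finset.card_le_card himg)
  -- arithmetic
  obtain ⟨r', rfl⟩ : ∃ r', r = r' + 2 := ⟨r - 2, by omega⟩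
  obtain ⟨m', rfl⟩ : ∃ m', m = m' + 2 := ⟨m - 2, by omega⟩
  have hrm' : r' ≤ m' := by omega
  simp only [Nat.add_sub_cancel] at hmain
  set E := G.edgeFinset.card with hE
  have idA : (m' + 2) * (m' + 1).choose (r' + 1) = (m' + 2).choose (r' + 2) * (r' + 2) :=
    Nat.add_one_mul_choose_eq (m' + 1) (r' + 1)
  have idB : (m' + 1) * m'.choose r' = (m' + 1).choose (r' + 1) * (r' + 1) :=
    Nat.add_one_mul_choose_eq m' r'
  have Cpos : 0 < m'.choose r' := Nat.choose_pos hrm'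
  have h3 : (m' + 2) * (m' + 1) * m'.choose r' =
      (m' + 2).choose (r' + 2) * ((r' + 2) * (r' + 1)) := by
    calc (m' + 2) * (m' + 1) * m'.choose r'
        = (m' + 2) * ((m' + 1) * m'.choose r') := by ring
      _ = (m' + 2) * ((m' + 1).choose (r' + 1) * (r' + 1)) := by rw [idB]
      _ = ((m' + 2) * (m' + 1).choose (r' + 1)) * (r' + 1) := by ring
      _ = ((m' + 2).choose (r' + 2) * (r' + 2)) * (r' + 1) := by rw [idA]
      _ = (m' + 2).choose (r' + 2) * ((r' + 2) * (r' + 1)) := by ring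
  have h4 : (m' + 2) * (m' + 1) * m'.choose r' ≤
      (r' + 2) * (r' + 1) * E * m'.choose r' := by
    rw [h3]
    calc (m' + 2).choose (r' + 2) * ((r' + 2) * (r' + 1))
        ≤ m'.choose r' * E * ((r' + 2) * (r' + 1)) :=
          Nat.mul_le_mul_right _ hmain
      _ = (r' + 2) * (r' + 1) * E * m'.choose r' := by ring
  have h5 : (m' + 2) * (m' + 1) ≤ (r' + 2) * (r' + 1) * E :=
    Nat.le_of_mul_le_mul_right h4 Cpos
  have h6 : (m' + 1) ^ 2 * (r' + 1) ≤ ((r' + 2) ^ 2 * E) * (r' + 1) := by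
    nlinarith [h5, hrm', Nat.mul_le_mul (Nat.add_le_add hrm' le_rfl : r' + 1 ≤ m' + 1)
      (le_refl E)]
  have : m' + 2 - 1 = m' + 1 := by omega
  rw [this]
  exact Nat.le_of_mul_le_mul_right h6 (by omega)
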